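/- Let ℰ, ℰ' be i.i.d. standard exponential random variables and let a ≥ b ≥ 0 with (a,b) ≠ (0,0). Set X_{a,b} = a(ℰ−1) − b(ℰ'−1). Then P(X_{a,b} > 0) = (1/e)·e^{b/a}/(1 + b/a) and E|X_{a,b}| = 2a·P(X_{a,b} > 0). -/

import Mathlib

open MeasureTheory ProbabilityTheory Real Set
open scoped ENNReal NNReal

/-- Density of a standard exponential random variable. -/
noncomputable def expPDF : ℝ → ℝ := fun x => if 0 < x then Real.exp (-x) else 0

/-- `X` has density `f` with respect to Lebesgue measure. -/
def HasDensity {Ω : Type*} [MeasurableSpace Ω] (P : Measure Ω) (X : Ω → ℝ) (f : ℝ → ℝ) : Prop :=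
  Measurable X ∧ Measure.map X P = volume.withDensity (fun x => ENNReal.ofReal (f x))


lemma integral_exp_neg_mul_Ioi {r : ℝ} (hr : 0 < r) :
    ∫ x in Ioi (0:ℝ), Real.exp (-(r * x)) = 1 / r := by
  have := integral_comp_mul_left_Ioi (fun x => Real.exp (-x)) 0 hr
  simp only [mul_zero, neg_zero, Real.exp_zero] at this
  rw [this, integral_exp_neg_Ioi]
  simp [smul_eq_mul, one_div]

lemma intOn_exp_neg_mul {r : ℝ} (hr : 0 < r) (c : ℝ) :
    IntegrableOn (fun x => Real.exp (-(r * x))) (Ioi c) := by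
  have := exp_neg_integrableOn_Ioi c hr
  exact this.congr_fun (fun x _ => by ring_nf) measurableSet_Ioi

lemma lint_ofReal {f : ℝ → ℝ} {s : Set ℝ} (hs : MeasurableSet s)
    (hint : IntegrableOn f s) (hnn : ∀ x ∈ s, 0 ≤ f x) :
    ∫⁻ x in s, ENNReal.ofReal (f x) = ENNReal.ofReal (∫ x in s, f x) :=
  (ofReal_integral_eq_lintegral_ofReal hint
    ((ae_restrict_iff' hs).mpr (.of_forall hnn))).symm

noncomputable def expMeas : Measure ℝ := volume.withDensity fun x => ENNReal.ofReal (expPDF x)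

lemma expPDF_meas : Measurable fun x => ENNReal.ofReal (expPDF x) := by
  apply Measurable.ennreal_ofReal
  unfold expPDF
  exact Measurable.ite measurableSet_Ioi (by fun_prop) measurable_const

lemma expMeas_Ioi {c : ℝ} (hc : 0 ≤ c) :
    expMeas (Ioi c) = ENNReal.ofReal (Real.exp (-c)) := by
  rw [expMeas, withDensity_apply _ measurableSet_Ioi]
  have h1 : ∫⁻ x in Ioi c, ENNReal.ofReal (expPDF x)
      = ∫⁻ x in Ioi c, ENNReal.ofReal (Real.exp (-x)) :=
    setLIntegral_congr_fun measurableSet_Ioi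
      ((fun x (hx : c < x) => by
        simp only [expPDF, if_pos (lt_of_le_of_lt hc hx)]))
  rw [h1, lint_ofReal measurableSet_Ioi
        (by simpa using intOn_exp_neg_mul one_pos c) (fun x _ => (Real.exp_pos _).le),
      integral_exp_neg_Ioi]

lemma lintegral_expMeas (g : ℝ → ℝ≥0∞) (hg : Measurable g) :
    ∫⁻ y, g y ∂expMeas = ∫⁻ y in Ioi 0, ENNReal.ofReal (Real.exp (-y)) * g y := by
  rw [expMeas, lintegral_withDensity_eq_lintegral_mul _ expPDF_meas hg]
  simp only [Pi.mul_apply]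
  rw [← lintegral_add_compl (fun y => ENNReal.ofReal (expPDF y) * g y) measurableSet_Ioi]
  have h2 : ∫⁻ y in (Ioi (0:ℝ))ᶜ, ENNReal.ofReal (expPDF y) * g y = 0 := by
    have : ∫⁻ y in (Ioi (0:ℝ))ᶜ, ENNReal.ofReal (expPDF y) * g y
        = ∫⁻ _ in (Ioi (0:ℝ))ᶜ, 0 :=
      setLIntegral_congr_fun measurableSet_Ioi.compl
        ((fun x hx => by
          have : ¬ (0 < x) := by simpa using hx
          simp only [expPDF, if_neg this, ENNReal.ofReal_zero, zero_mul]))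
    rw [this]; simp
  rw [h2, add_zero]
  exact setLIntegral_congr_fun measurableSet_Ioi
    ((fun x (hx : 0 < x) => by simp only [expPDF, if_pos hx]))

instance : IsProbabilityMeasure expMeas := by
  constructor
  have h : expMeas univ = ∫⁻ y, (1:ℝ≥0∞) ∂expMeas := by simp
  rw [h]
  have h2 := lintegral_expMeas (fun _ => 1) measurable_const
  simp only [mul_one] at h2
  rw [h2]
  rw [lint_ofReal measurableSet_Ioi (by simpa using intOn_exp_neg_mul one_pos 0)
      (fun x _ => (Real.exp_pos _).le), integral_exp_neg_Ioi_zero]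
  simp

lemma prod_tail {a b c : ℝ} (ha : 0 < a) (hb : 0 ≤ b) (hc : 0 ≤ c) :
    (expMeas.prod expMeas) {p : ℝ × ℝ | c < a * p.1 - b * p.2}
      = ENNReal.ofReal (Real.exp (-(c/a)) * (a/(a+b))) := by
  have hmeas : Measurable fun p : ℝ × ℝ => a * p.1 - b * p.2 := by fun_prop
  have hs : MeasurableSet {p : ℝ × ℝ | c < a * p.1 - b * p.2} :=
    measurableSet_lt measurable_const hmeas
  rw [Measure.prod_apply_symm hs]
  have hslice : ∀ y : ℝ, (fun x => (x, y)) ⁻¹' {p : ℝ × ℝ | c < a * p.1 - b * p.2}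
      = Ioi ((c + b * y) / a) := by
    intro y
    ext x
    simp only [mem_preimage, mem_setOf_eq, mem_Ioi, div_lt_iff₀ ha]
    constructor <;> intro h <;> nlinarith
  simp only [hslice]
  have hmg : Measurable fun y : ℝ => expMeas (Ioi ((c + b * y) / a)) := by
    have hanti : Antitone fun t : ℝ => expMeas (Ioi t) :=
      fun s t hst => measure_mono (Ioi_subset_Ioi hst)
    exact hanti.measurable.comp (by fun_prop)
  rw [lintegral_expMeas _ hmg]
  have hcong : ∫⁻ y in Ioi 0, ENNReal.ofReal (Real.exp (-y)) * expMeas (Ioi ((c + b * y) / a))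
      = ∫⁻ y in Ioi 0, ENNReal.ofReal (Real.exp (-y) * Real.exp (-((c + b * y) / a))) := by
    refine setLIntegral_congr_fun measurableSet_Ioi (fun y (hy : 0 < y) => ?_)
    beta_reduce
    rw [expMeas_Ioi (by positivity), ← ENNReal.ofReal_mul (Real.exp_pos _).le]
  rw [hcong]
  have hfun : ∀ y : ℝ, Real.exp (-y) * Real.exp (-((c + b * y) / a))
      = Real.exp (-(c/a)) * Real.exp (-((1 + b/a) * y)) := by
    intro y
    rw [← Real.exp_add, ← Real.exp_add]
    congr 1
    field_simp
    ring
  simp only [hfun]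
  have hr : 0 < 1 + b / a := by positivity
  rw [lint_ofReal measurableSet_Ioi ((intOn_exp_neg_mul hr 0).const_mul _)
      (fun y _ => by positivity),
    MeasureTheory.integral_const_mul, integral_exp_neg_mul_Ioi hr]
  congr 1
  field_simp

lemma expPDF_meas_real : Measurable expPDF := by
  unfold expPDF
  exact Measurable.ite measurableSet_Ioi (by fun_prop) measurable_const

lemma intOn_id_exp : IntegrableOn (fun x : ℝ => Real.exp (-x) * x) (Ioi 0) := by
  have := Real.GammaIntegral_convergent (s := 2) (by norm_num)
  have h21 : (2:ℝ) - 1 = 1 := by norm_num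
  simpa [h21, Real.rpow_one] using this

lemma integrable_id_expMeas : Integrable (fun x : ℝ => x) expMeas := by
  rw [expMeas, integrable_withDensity_iff expPDF_meas (ae_of_all _ fun x => ENNReal.ofReal_lt_top)]
  have heq : (fun x : ℝ => x * (ENNReal.ofReal (expPDF x)).toReal)
      = (Ioi (0:ℝ)).indicator (fun x => Real.exp (-x) * x) := by
    funext x
    by_cases hx : 0 < x
    · simp [expPDF, if_pos hx, indicator_of_mem (mem_Ioi.mpr hx),
        ENNReal.toReal_ofReal (Real.exp_pos _).le, mul_comm]
    · simp [expPDF, if_neg hx, indicator_of_notMem (fun h => hx (mem_Ioi.mp h))]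
  rw [heq]
  exact intOn_id_exp.integrable_indicator measurableSet_Ioi

lemma integral_id_expMeas : ∫ x, x ∂expMeas = 1 := by
  have hP : expMeas = volume.withDensity fun x => ((expPDF x).toNNReal : ℝ≥0∞) := rfl
  rw [hP, integral_withDensity_eq_integral_smul
    (show Measurable fun x => (expPDF x).toNNReal from
      measurable_real_toNNReal.comp expPDF_meas_real) _]
  have heq : (fun x : ℝ => (expPDF x).toNNReal • x)
      = (Ioi (0:ℝ)).indicator (fun x => Real.exp (-x) * x) := by
    funext x
    by_cases hx : 0 < x
    · simp [expPDF, if_pos hx, indicator_of_mem (mem_Ioi.mpr hx), NNReal.smul_def,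
        Real.coe_toNNReal _ (Real.exp_pos _).le, mul_comm]
    · simp [expPDF, if_neg hx, indicator_of_notMem (fun h => hx (mem_Ioi.mp h))]
  rw [heq, integral_indicator measurableSet_Ioi]
  have := Real.Gamma_eq_integral (s := 2) (by norm_num)
  have h21 : (2:ℝ) - 1 = 1 := by norm_num
  rw [h21] at this
  simp only [Real.rpow_one] at this
  rw [← this, Real.Gamma_two]

theorem stmt_5 {Ω : Type} [MeasurableSpace Ω] (P : Measure Ω) [IsProbabilityMeasure P]
    (E E' : Ω → ℝ) (hE : HasDensity P E expPDF) (hE' : HasDensity P E' expPDF)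
    (hind : IndepFun E E' P)
    (a b : ℝ) (hab : b ≤ a) (hb : 0 ≤ b) (ha : 0 < a) :
    P {ω | 0 < a * (E ω - 1) - b * (E' ω - 1)} =
      ENNReal.ofReal ((1 / Real.exp 1) * Real.exp (b / a) / (1 + b / a)) ∧
    (∫ ω, |a * (E ω - 1) - b * (E' ω - 1)| ∂P) =
      2 * a * ((1 / Real.exp 1) * Real.exp (b / a) / (1 + b / a)) := by
  obtain ⟨hEm, hEmap⟩ := hE
  obtain ⟨hE'm, hE'map⟩ := hE'
  have hEmap' : Measure.map E P = expMeas := hEmap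
  have hE'map' : Measure.map E' P = expMeas := hE'map
  have hpair : Measure.map (fun ω => (E ω, E' ω)) P = expMeas.prod expMeas := by
    rw [(indepFun_iff_map_prod_eq_prod_map_map hEm.aemeasurable hE'm.aemeasurable).mp hind,
      hEmap', hE'map']
  set X : Ω → ℝ := fun ω => a * (E ω - 1) - b * (E' ω - 1) with hX
  have hapb : 0 < a + b := by linarith
  have hkey : ∀ c : ℝ, 0 ≤ c → P {ω | c < X ω}
      = ENNReal.ofReal (Real.exp (-((a - b + c)/a)) * (a/(a+b))) := by
    intro c hc
    have hsm : MeasurableSet {p : ℝ × ℝ | a - b + c < a * p.1 - b * p.2} :=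
      measurableSet_lt measurable_const (by fun_prop)
    have hset : {ω | c < X ω}
        = (fun ω => (E ω, E' ω)) ⁻¹' {p : ℝ × ℝ | a - b + c < a * p.1 - b * p.2} := by
      ext ω
      simp only [hX, mem_setOf_eq, mem_preimage]
      constructor <;> intro h <;> nlinarith
    rw [hset, ← Measure.map_apply (hEm.prodMk hE'm) hsm, hpair,
      prod_tail ha hb (by linarith)]
  have hval : Real.exp (-((a - b)/a)) * (a/(a+b))
      = 1 / Real.exp 1 * Real.exp (b/a) / (1 + b/a) := by
    have h1 : -((a - b)/a) = b/a - 1 := by field_simp; ring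
    have h2 : (1:ℝ) + b/a = (a+b)/a := by field_simp
    rw [h1, Real.exp_sub, h2]
    field_simp
  constructor
  · have h0 := hkey 0 le_rfl
    simp only [add_zero] at h0
    rw [h0, hval]
  · -- integrability and mean
    have hEint : Integrable E P := by
      have h1 : Integrable (fun x : ℝ => x) (Measure.map E P) :=
        hEmap' ▸ integrable_id_expMeas
      exact (integrable_map_measure aestronglyMeasurable_id hEm.aemeasurable).mp h1
    have hE'int : Integrable E' P := by
      have h1 : Integrable (fun x : ℝ => x) (Measure.map E' P) :=
        hE'map' ▸ integrable_id_expMeas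
      exact (integrable_map_measure aestronglyMeasurable_id hE'm.aemeasurable).mp h1
    have hEmean : ∫ ω, E ω ∂P = 1 := by
      have h1 := integral_map (μ := P) (φ := E) hEm.aemeasurable
        (f := fun x => x) aestronglyMeasurable_id
      rw [hEmap', integral_id_expMeas] at h1
      exact h1.symm
    have hE'mean : ∫ ω, E' ω ∂P = 1 := by
      have h1 := integral_map (μ := P) (φ := E') hE'm.aemeasurable
        (f := fun x => x) aestronglyMeasurable_id
      rw [hE'map', integral_id_expMeas] at h1
      exact h1.symm
    have hXint : Integrable X P :=
      ((hEint.sub (integrable_const 1)).const_mul a).sub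
        ((hE'int.sub (integrable_const 1)).const_mul b)
    have hA : Integrable (fun ω => a * (E ω - 1)) P :=
      (hEint.sub (integrable_const 1)).const_mul a
    have hB : Integrable (fun ω => b * (E' ω - 1)) P :=
      (hE'int.sub (integrable_const 1)).const_mul b
    have hXmean : ∫ ω, X ω ∂P = 0 := by
      simp only [hX]
      rw [integral_sub hA hB, MeasureTheory.integral_const_mul,
        MeasureTheory.integral_const_mul,
        integral_sub hEint (integrable_const 1),
        integral_sub hE'int (integrable_const 1), hEmean, hE'mean]
      simp
    have habs : ∀ ω, |X ω| = 2 * max (X ω) 0 - X ω := by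
      intro ω
      rcases le_total (X ω) 0 with h | h
      · rw [abs_of_nonpos h, max_eq_right h]; ring
      · rw [abs_of_nonneg h, max_eq_left h]; ring
    have hposint : Integrable (fun ω => max (X ω) 0) P := hXint.pos_part
    have hstep : (∫ ω, |X ω| ∂P) = 2 * ∫ ω, max (X ω) 0 ∂P := by
      simp_rw [habs]
      rw [integral_sub (hposint.const_mul 2) hXint, MeasureTheory.integral_const_mul, hXmean]
      ring
    have hlayer : ∫ ω, max (X ω) 0 ∂P
        = ∫ t in Ioi 0, (P {ω | t < max (X ω) 0}).toReal :=
      hposint.integral_eq_integral_meas_lt (ae_of_all _ fun ω => le_max_right _ _)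
    have hcong : ∫ t in Ioi 0, (P {ω | t < max (X ω) 0}).toReal
        = ∫ t in Ioi 0, (Real.exp (-((a - b)/a)) * (a/(a+b))) * Real.exp (-(a⁻¹ * t)) := by
      refine setIntegral_congr_fun measurableSet_Ioi (fun t (ht : 0 < t) => ?_)
      have hset : {ω | t < max (X ω) 0} = {ω | t < X ω} := by
        ext ω
        simp only [mem_setOf_eq, lt_max_iff]
        exact ⟨fun h => h.resolve_right (fun h' => absurd ht (not_lt.mpr h'.le)),
          fun h => Or.inl h⟩
      rw [hset, hkey t ht.le, ENNReal.toReal_ofReal (by positivity)]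
      rw [show -((a - b + t)/a) = -((a-b)/a) + -(a⁻¹ * t) by field_simp; ring, Real.exp_add]
      ring
    rw [hstep, hlayer, hcong, MeasureTheory.integral_const_mul,
      integral_exp_neg_mul_Ioi (by positivity), one_div, inv_inv, ← hval]
    ring
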